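/- Let r ≥ 0 be an integer, let s ∈ ℂ with s ≠ 0, and let z ∈ ℂ with |z| < 1. Then ∑_{i=0}^{r} z · F(1+i, 1−s, r+2, z) = ((r+1)/(−s)) · ( (1−z)^s − 1 ), where (1−z)^s = exp(s · Log(1−z)) is the principal power. -/

import Mathlib

open Complex Finset Filter Polynomial Topology Metric


lemma poch_ne_zero {c : ℂ} (hc : ∀ n : ℕ, c + n ≠ 0) (n : ℕ) :
    (ascPochhammer ℂ n).eval c ≠ 0 := by
  induction n with
  | zero => simp
  | succ n ih =>
    rw [ascPochhammer_succ_eval]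
    exact mul_ne_zero ih (hc n)

lemma tendsto_ratio (a c : ℂ) :
    Tendsto (fun n : ℕ => (a + n) / (c + n)) atTop (𝓝 1) := by
  have hlow : ∀ᶠ n : ℕ in atTop, (n : ℝ) - ‖c‖ ≤ ‖c + (n : ℂ)‖ ∧ 0 < (n : ℝ) - ‖c‖ := by
    filter_upwards [eventually_gt_atTop ⌈‖c‖⌉₊] with n hn
    have h1 : ‖c‖ < (n : ℝ) := lt_of_le_of_lt (Nat.le_ceil _) (by exact_mod_cast hn)
    constructor
    · have h2 : ‖(n : ℂ)‖ ≤ ‖c + n‖ + ‖c‖ := by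
        calc ‖(n : ℂ)‖ = ‖(c + n) + (-c)‖ := by ring_nf
        _ ≤ ‖c + (n:ℂ)‖ + ‖(-c)‖ := norm_add_le _ _
        _ = ‖c + (n:ℂ)‖ + ‖c‖ := by rw [norm_neg]
      have h3 : ‖(n : ℂ)‖ = (n : ℝ) := by
        simp
      linarith
    · linarith
  have h0 : Tendsto (fun n : ℕ => (a - c) / (c + n)) atTop (𝓝 0) := by
    apply squeeze_zero_norm' (a := fun n : ℕ => ‖a - c‖ / ((n : ℝ) - ‖c‖))
    · filter_upwards [hlow] with n hn
      rw [norm_div]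
      gcongr
      · exact hn.2
      · exact hn.1
    · apply Filter.Tendsto.div_atTop tendsto_const_nhds
      have := tendsto_atTop_add_const_right atTop (-‖c‖) (tendsto_natCast_atTop_atTop (R := ℝ))
      simpa [sub_eq_add_neg] using this
  have h1 : Tendsto (fun n : ℕ => 1 + (a - c) / (c + n)) atTop (𝓝 1) := by
    simpa using tendsto_const_nhds.add h0
  apply h1.congr'
  filter_upwards [hlow] with n hn
  have hne : c + (n : ℂ) ≠ 0 := by
    intro h
    rw [h, norm_zero] at hn
    linarith [hn.1, hn.2]
  field_simp
  ring


lemma summable_hyp (a b c z : ℂ) (hc : ∀ n : ℕ, c + n ≠ 0) (hz : ‖z‖ < 1) :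
    Summable (fun n : ℕ => (ascPochhammer ℂ n).eval a * (ascPochhammer ℂ n).eval b /
      ((n.factorial : ℂ) * (ascPochhammer ℂ n).eval c) * z ^ n) := by
  have hratio : Tendsto (fun n : ℕ => ‖(a + n) / (1 + n) * ((b + n) / (c + n)) * z‖)
      atTop (𝓝 ‖z‖) := by
    have h := (((tendsto_ratio a 1).mul (tendsto_ratio b c)).mul_const z).norm
    simpa using h
  refine summable_of_ratio_norm_eventually_le (r := (1 + ‖z‖) / 2) (by linarith) ?_
  have hev : ∀ᶠ n : ℕ in atTop, ‖(a + n) / (1 + n) * ((b + n) / (c + n)) * z‖ ≤ (1 + ‖z‖) / 2 :=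
    hratio.eventually_le_const (by linarith)
  filter_upwards [hev] with n hn
  have hfac : ((n.factorial : ℕ) : ℂ) ≠ 0 := Nat.cast_ne_zero.mpr n.factorial_ne_zero
  have hp : (ascPochhammer ℂ n).eval c ≠ 0 := poch_ne_zero hc n
  have hn1 : (1 : ℂ) + n ≠ 0 := by
    intro h
    have := hc 0  -- dummy
    have : ((1 + n : ℕ) : ℂ) = 0 := by push_cast; linear_combination h
    exact Nat.cast_ne_zero.mpr (Nat.succ_ne_zero n) (by push_cast at this ⊢; linear_combination this)
  have hcn : c + n ≠ 0 := hc n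
  have key : (ascPochhammer ℂ (n+1)).eval a * (ascPochhammer ℂ (n+1)).eval b /
        (((n+1).factorial : ℂ) * (ascPochhammer ℂ (n+1)).eval c) * z ^ (n+1)
      = (ascPochhammer ℂ n).eval a * (ascPochhammer ℂ n).eval b /
        ((n.factorial : ℂ) * (ascPochhammer ℂ n).eval c) * z ^ n *
        ((a + n) / (1 + n) * ((b + n) / (c + n)) * z) := by
    have h1 : (((n+1).factorial : ℕ) : ℂ) = (n.factorial : ℂ) * (1 + n) := by
      push_cast [Nat.factorial_succ]; ring
    rw [ascPochhammer_succ_eval, ascPochhammer_succ_eval, ascPochhammer_succ_eval, h1]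
    field_simp
    ring
  rw [key, norm_mul]
  calc ‖_‖ * ‖(a + n) / (1 + n) * ((b + n) / (c + n)) * z‖
      ≤ ‖_‖ * ((1 + ‖z‖) / 2) := by gcongr
    _ = (1 + ‖z‖) / 2 * ‖_‖ := mul_comm _ _


lemma slit_aux {w : ℂ} (hw : w ∈ ball (0:ℂ) 1) : 1 - w ∈ Complex.slitPlane := by
  rw [mem_ball_zero_iff] at hw
  left
  have : w.re ≤ ‖w‖ := Complex.re_le_norm w
  have : ‖w‖ < 1 := hw
  simp only [Complex.sub_re, Complex.one_re]
  have := Complex.re_le_norm w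
  linarith

lemma iterDeriv_one_sub_cpow (s : ℂ) (n : ℕ) : ∀ w ∈ ball (0:ℂ) 1,
    iteratedDeriv n (fun w : ℂ => (1 - w) ^ s) w
      = (ascPochhammer ℂ n).eval (-s) * (1 - w) ^ (s - n) := by
  induction n with
  | zero =>
    intro w _
    simp [iteratedDeriv_zero]
  | succ n ih =>
    intro w hw
    rw [iteratedDeriv_succ]
    have hev : (iteratedDeriv n (fun w : ℂ => (1 - w) ^ s))
        =ᶠ[𝓝 w] fun w => (ascPochhammer ℂ n).eval (-s) * (1 - w) ^ (s - n) := by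
      filter_upwards [isOpen_ball.mem_nhds hw] with x hx using ih x hx
    rw [hev.deriv_eq]
    have hd : HasDerivAt (fun w : ℂ => (ascPochhammer ℂ n).eval (-s) * (1 - w) ^ (s - n))
        ((ascPochhammer ℂ n).eval (-s) * ((s - n) * (1 - w) ^ (s - n - 1) * (-1))) w := by
      exact (((hasDerivAt_id w).const_sub 1).cpow_const (slit_aux hw)).const_mul _
    rw [hd.deriv]
    rw [ascPochhammer_succ_eval]
    have he : s - (n : ℂ) - 1 = s - ((n : ℕ) + 1 : ℕ) := by push_cast; ring
    rw [he]
    ring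

lemma hasSum_binom (s z : ℂ) (hz : ‖z‖ < 1) :
    HasSum (fun n : ℕ => (ascPochhammer ℂ n).eval (-s) / (n.factorial : ℂ) * z ^ n)
      ((1 - z) ^ s) := by
  have hd : DifferentiableOn ℂ (fun w : ℂ => (1 - w) ^ s) (ball 0 1) := by
    intro w hw
    exact (((hasDerivAt_id w).const_sub 1).cpow_const (slit_aux hw)).differentiableAt
      |>.differentiableWithinAt
  have H := Complex.hasSum_taylorSeries_on_ball hd (mem_ball_zero_iff.mpr hz)
  have h0 : (0 : ℂ) ∈ ball (0:ℂ) 1 := mem_ball_zero_iff.mpr (by norm_num)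
  convert H using 2 with n
  · rfl
  rw [iterDeriv_one_sub_cpow s n 0 h0]
  simp only [sub_zero, smul_eq_mul]
  rw [Complex.one_cpow]
  ring


lemma poch_shift (n : ℕ) (x : ℂ) :
    (ascPochhammer ℂ (n + 1)).eval x = x * (ascPochhammer ℂ n).eval (x + 1) := by
  rw [ascPochhammer_succ_left]
  simp [eval_comp]

lemma poch_eval_add_one (n : ℕ) (x : ℂ) :
    x * (ascPochhammer ℂ n).eval (x + 1) = (ascPochhammer ℂ n).eval x * (x + n) := by
  rw [← poch_shift, ascPochhammer_succ_eval]

lemma poch_sum (n r : ℕ) :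
    ((n : ℂ) + 1) * ∑ i ∈ Finset.range (r + 1), (ascPochhammer ℂ n).eval (1 + (i : ℂ)) 
      = ((r : ℂ) + 1) * (ascPochhammer ℂ n).eval ((r : ℂ) + 2) := by
  induction r with
  | zero =>
    have key := poch_eval_add_one n 1
    norm_num at key ⊢
    linear_combination -key
  | succ r ih =>
    rw [Finset.sum_range_succ, mul_add, ih]
    have key := poch_eval_add_one n ((r : ℂ) + 2)
    have e1 : (1 : ℂ) + ((r + 1 : ℕ) : ℂ) = (r : ℂ) + 2 := by push_cast; ring
    have e2 : ((r : ℂ) + 2) + 1 = ((r + 1 : ℕ) : ℂ) + 2 := by push_cast; ring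
    rw [e1, ← e2]
    push_cast
    linear_combination -key

/-- The Gauss hypergeometric series `F(a,b,c,z) = ∑ (a)ₙ(b)ₙ/(n!(c)ₙ) zⁿ`. -/
noncomputable def hyperF (a b c z : ℂ) : ℂ :=
  ∑' n : ℕ, ((ascPochhammer ℂ n).eval a * (ascPochhammer ℂ n).eval b /
      ((n.factorial : ℂ) * (ascPochhammer ℂ n).eval c)) * z ^ n

/-- The telescoping identity from case (C1, III): for `s ≠ 0` and `|z| < 1`,
`∑_{i=0}^{r} z F(1+i, 1−s, r+2, z) = ((r+1)/(−s)) ((1−z)^s − 1)`,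
where `(1−z)^s` is the principal complex power. -/
theorem stmt_19 (r : ℕ) (s z : ℂ) (hs : s ≠ 0) (hz : ‖z‖ < 1) :
    ∑ i ∈ Finset.range (r + 1), z * hyperF (1 + i) (1 - s) ((r : ℂ) + 2) z
      = ((r : ℂ) + 1) / (-s) * ((1 - z) ^ s - 1) := by
  have hz' : ‖z‖ < 1 := hz
  have hc : ∀ n : ℕ, ((r : ℂ) + 2) + n ≠ 0 := by
    intro n
    have h1 : ((r : ℂ) + 2) + n = ((r + 2 + n : ℕ) : ℂ) := by push_cast; ring
    rw [h1]
    exact Nat.cast_ne_zero.mpr (by omega)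
  have hsumm : ∀ i : ℕ, Summable (fun n : ℕ =>
      (ascPochhammer ℂ n).eval (1 + (i : ℂ)) * (ascPochhammer ℂ n).eval (1 - s) /
        ((n.factorial : ℂ) * (ascPochhammer ℂ n).eval ((r : ℂ) + 2)) * z ^ n) :=
    fun i => summable_hyp _ _ _ _ hc hz'
  have step1 : ∀ i ∈ Finset.range (r + 1), z * hyperF (1 + (i : ℂ)) (1 - s) ((r : ℂ) + 2) z
      = ∑' n : ℕ, z * ((ascPochhammer ℂ n).eval (1 + (i : ℂ)) * (ascPochhammer ℂ n).eval (1 - s) /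
        ((n.factorial : ℂ) * (ascPochhammer ℂ n).eval ((r : ℂ) + 2)) * z ^ n) := by
    intro i _
    rw [hyperF, tsum_mul_left]
  rw [Finset.sum_congr rfl step1,
    ← Summable.tsum_finsetSum (fun i _ => ((hsumm i).mul_left z))]
  have hB := hasSum_binom s z hz'
  have hB1 : HasSum (fun n : ℕ => (ascPochhammer ℂ (n + 1)).eval (-s) / ((n + 1).factorial : ℂ)
      * z ^ (n + 1)) ((1 - z) ^ s - 1) := by
    have h := (hasSum_nat_add_iff' (f := fun n : ℕ => (ascPochhammer ℂ n).eval (-s) /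
      (n.factorial : ℂ) * z ^ n) 1).mpr hB
    simpa using h
  have hB2 := hB1.mul_left (((r : ℂ) + 1) / (-s))
  rw [← hB2.tsum_eq]
  apply tsum_congr
  intro n
  -- nonzero facts
  have hfac : ((n.factorial : ℕ) : ℂ) ≠ 0 := Nat.cast_ne_zero.mpr n.factorial_ne_zero
  have hp : (ascPochhammer ℂ n).eval ((r : ℂ) + 2) ≠ 0 := poch_ne_zero hc n
  have hn1 : ((n : ℂ) + 1) ≠ 0 := Nat.cast_add_one_ne_zero n
  -- rewrite each summand and collapse the finite sum
  have step2 : ∀ i ∈ Finset.range (r + 1),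
      z * ((ascPochhammer ℂ n).eval (1 + (i : ℂ)) * (ascPochhammer ℂ n).eval (1 - s) /
        ((n.factorial : ℂ) * (ascPochhammer ℂ n).eval ((r : ℂ) + 2)) * z ^ n)
      = (ascPochhammer ℂ n).eval (1 + (i : ℂ)) *
        (z * ((ascPochhammer ℂ n).eval (1 - s) /
          ((n.factorial : ℂ) * (ascPochhammer ℂ n).eval ((r : ℂ) + 2)) * z ^ n)) := by
    intro i _
    ring
  rw [Finset.sum_congr rfl step2, ← Finset.sum_mul]
  have hS : ∑ i ∈ Finset.range (r + 1), (ascPochhammer ℂ n).eval (1 + (i : ℂ))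
      = ((r : ℂ) + 1) * (ascPochhammer ℂ n).eval ((r : ℂ) + 2) / ((n : ℂ) + 1) := by
    rw [eq_div_iff hn1, mul_comm]
    exact poch_sum n r
  rw [hS, poch_shift]
  have hfac1 : (((n + 1).factorial : ℕ) : ℂ) = ((n : ℂ) + 1) * (n.factorial : ℂ) := by
    push_cast [Nat.factorial_succ]; ring
  rw [hfac1]
  have h1s : -s + 1 = 1 - s := by ring
  rw [h1s]
  field_simp
  ring
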